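/- arXiv:1906.07594 — 2 statements merged into one kernel-verified Lean document; each statement's English description precedes it below -/
import Mathlib

section
/- If p_1,…,p_n are elements of a Boolean algebra of S-probabilities and f is a Bell valuation on 2^N, then 0 ≤ ∑_{∅≠I⊆N} f(I)·p_I ≤ 1 pointwise on S, where p_I := ⋀_{i∈I} p_i. In the special case where f is the sum of all elementary Bell valuations, this yields 0 ≤ ∑_{∅≠I⊆N} (-1)^{|I|+1} p_I ≤ 1. -/
open Finset

lemma stmt_7_aux {S : Type*} {n : ℕ} (A : Fin n → Set S)
    (f : Finset (Fin n) → ℝ)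
    (hf : ∀ K : Finset (Fin n), K.Nonempty →
      0 ≤ ∑ J ∈ K.powerset.filter Finset.Nonempty, f J ∧
      ∑ J ∈ K.powerset.filter Finset.Nonempty, f J ≤ 1)
    (s : S) :
    0 ≤ ∑ I ∈ (univ : Finset (Fin n)).powerset.filter Finset.Nonempty,
        f I * Set.indicator (⋂ i ∈ I, A i) (fun _ => (1 : ℝ)) s ∧
      ∑ I ∈ (univ : Finset (Fin n)).powerset.filter Finset.Nonempty,
        f I * Set.indicator (⋂ i ∈ I, A i) (fun _ => (1 : ℝ)) s ≤ 1 := by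
  classical
  set K : Finset (Fin n) := univ.filter (fun i => s ∈ A i) with hK
  have hind : ∀ I : Finset (Fin n),
      Set.indicator (⋂ i ∈ I, A i) (fun _ => (1 : ℝ)) s = if I ⊆ K then 1 else 0 := by
    intro I
    by_cases h : I ⊆ K
    · rw [if_pos h, Set.indicator_of_mem]
      simp only [Set.mem_iInter]
      intro i hi
      have := h hi
      simp [hK] at this
      exact this
    · rw [if_neg h, Set.indicator_of_notMem]
      simp only [Set.mem_iInter]
      intro hmem
      exact h (fun i hi => by simp [hK, hmem i hi])
  have hsum : ∑ I ∈ (univ : Finset (Fin n)).powerset.filter Finset.Nonempty,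
      f I * Set.indicator (⋂ i ∈ I, A i) (fun _ => (1 : ℝ)) s
      = ∑ J ∈ K.powerset.filter Finset.Nonempty, f J := by
    rw [Finset.sum_congr rfl (fun I _ => by rw [hind I, mul_ite, mul_one, mul_zero]),
      Finset.sum_ite, Finset.sum_const, smul_zero, add_zero]
    apply Finset.sum_congr _ (fun _ _ => rfl)
    ext I
    simp only [Finset.mem_filter, Finset.mem_powerset]
    constructor
    · rintro ⟨⟨-, h2⟩, h3⟩; exact ⟨h3, h2⟩
    · rintro ⟨h1, h2⟩; exact ⟨⟨Finset.subset_univ _, h2⟩, h1⟩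
  rw [hsum]
  rcases K.eq_empty_or_nonempty with h | h
  · rw [h]
    rw [Finset.powerset_empty, Finset.filter_singleton]
    simp [Finset.not_nonempty_empty]
  · exact hf K h

/-- for indicator functions of sets `A i` in a field of subsets of `S`
(a Boolean algebra of S-probabilities), every Bell valuation `f` yields the Bell-type
inequality `0 ≤ ∑_{∅≠I⊆N} f(I)·p_I ≤ 1` pointwise, where `p_I` is the indicator of
`⋂_{i∈I} A i`. The special case `f = ∑` of all elementary Bell valuations, where
`f(I) = (-1)^{|I|+1}`, is included as the second conjunct. -/
theorem stmt_7 {S : Type*} (n : ℕ) (hn : 1 ≤ n) (A : Fin n → Set S)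
    (f : Finset (Fin n) → ℝ)
    (hf : ∀ K : Finset (Fin n), K.Nonempty →
      0 ≤ ∑ J ∈ K.powerset.filter Finset.Nonempty, f J ∧
      ∑ J ∈ K.powerset.filter Finset.Nonempty, f J ≤ 1)
    (s : S) :
    (0 ≤ ∑ I ∈ (univ : Finset (Fin n)).powerset.filter Finset.Nonempty,
        f I * Set.indicator (⋂ i ∈ I, A i) (fun _ => (1 : ℝ)) s ∧
      ∑ I ∈ (univ : Finset (Fin n)).powerset.filter Finset.Nonempty,
        f I * Set.indicator (⋂ i ∈ I, A i) (fun _ => (1 : ℝ)) s ≤ 1) ∧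
    (0 ≤ ∑ I ∈ (univ : Finset (Fin n)).powerset.filter Finset.Nonempty,
        (-1 : ℝ) ^ (I.card + 1) * Set.indicator (⋂ i ∈ I, A i) (fun _ => (1 : ℝ)) s ∧
      ∑ I ∈ (univ : Finset (Fin n)).powerset.filter Finset.Nonempty,
        (-1 : ℝ) ^ (I.card + 1) * Set.indicator (⋂ i ∈ I, A i) (fun _ => (1 : ℝ)) s ≤ 1) := by
  refine ⟨stmt_7_aux A f hf s, stmt_7_aux A (fun I => (-1 : ℝ) ^ (I.card + 1)) ?_ s⟩
  intro K hKne
  have key : ∑ J ∈ K.powerset.filter Finset.Nonempty, (-1 : ℝ) ^ (J.card + 1) = 1 := by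
    have h0 : ∑ J ∈ K.powerset, (-1 : ℝ) ^ J.card = 0 := by
      have hz := Finset.sum_powerset_neg_one_pow_card_of_nonempty hKne
      exact_mod_cast hz
    have hsplit : ∑ J ∈ K.powerset, (-1 : ℝ) ^ J.card
        = (-1 : ℝ) ^ (∅ : Finset (Fin n)).card
          + ∑ J ∈ K.powerset.filter Finset.Nonempty, (-1 : ℝ) ^ J.card := by
      rw [← Finset.sum_filter_add_sum_filter_not K.powerset (· = ∅)]
      congr 1
      · rw [Finset.filter_eq']
        simp [Finset.empty_mem_powerset]
      · apply Finset.sum_congr _ (fun _ _ => rfl)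
        ext J
        simp [Finset.nonempty_iff_ne_empty]
    have : ∑ J ∈ K.powerset.filter Finset.Nonempty, (-1 : ℝ) ^ J.card = -1 := by
      have := hsplit.symm.trans h0
      simp at this
      linarith
    calc ∑ J ∈ K.powerset.filter Finset.Nonempty, (-1 : ℝ) ^ (J.card + 1)
        = -∑ J ∈ K.powerset.filter Finset.Nonempty, (-1 : ℝ) ^ J.card := by
          rw [← Finset.sum_neg_distrib]
          exact Finset.sum_congr rfl (fun J _ => by ring)
      _ = 1 := by rw [this]; ring
  rw [key]; exact ⟨zero_le_one, le_refl 1⟩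
end

section
/- Let P be a set of functions S → {0,1}. For f, g ∈ P, there exists a ∈ P with a ≤ f ≤ a + g ≤ 1 if and only if there exists b ∈ P with b ≤ f ≤ b + (1−g) ≤ 1. Equivalently, the pointwise minimum f ⊼ g' belongs to P iff the pointwise minimum f ⊼ g belongs to P, provided P is closed under p ↦ 1−p and p,q ↦ p+q for orthogonal p ≤ 1−q. -/
/-- in a generalized field of events `P` of `{0,1}`-valued functions
(`0 ∈ P`, closed under complement and under sums of orthogonal elements), for
`f, g ∈ P` there is a witness `a ∈ P` with `a ≤ f ≤ a + g ≤ 1` iff there is a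
witness `b ∈ P` with `b ≤ f ≤ b + g' ≤ 1`; equivalently, `f ⊼ g' ∈ P` iff
`f ⊼ g ∈ P` (pointwise minima). -/
theorem stmt_12 {S : Type*} (P : Set (S → ℝ))
    (hval : ∀ p ∈ P, ∀ s, p s = 0 ∨ p s = 1)
    (h0 : (fun _ => (0 : ℝ)) ∈ P)
    (hc : ∀ p ∈ P, (fun s => 1 - p s) ∈ P)
    (hsum : ∀ p ∈ P, ∀ q ∈ P, (∀ s, p s ≤ 1 - q s) → (fun s => p s + q s) ∈ P)
    (f g : S → ℝ) (hf : f ∈ P) (hg : g ∈ P) :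
    ((∃ a ∈ P, (∀ s, a s ≤ f s) ∧ (∀ s, f s ≤ a s + g s) ∧ (∀ s, a s + g s ≤ 1)) ↔
      (∃ b ∈ P, (∀ s, b s ≤ f s) ∧ (∀ s, f s ≤ b s + (1 - g s)) ∧
        (∀ s, b s + (1 - g s) ≤ 1))) ∧
    ((fun s => min (f s) (1 - g s)) ∈ P ↔ (fun s => min (f s) (g s)) ∈ P) := by
  -- key: if min (f, 1-h) ∈ P for h ∈ P, then min (f, h) ∈ P
  have key : ∀ h ∈ P, (fun s => min (f s) (1 - h s)) ∈ P →
      (fun s => min (f s) (h s)) ∈ P := by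
    intro h hh hm
    have h1 : (fun s => 1 - f s) ∈ P := hc f hf
    have horth : ∀ s, (1 - f s) ≤ 1 - min (f s) (1 - h s) := by
      intro s; have := min_le_left (f s) (1 - h s); linarith
    have hfin := hc _ (hsum _ h1 _ hm horth)
    convert hfin using 1
    funext s
    rcases hval f hf s with hfv | hfv <;> rcases hval h hh s with hhv | hhv <;>
      rw [hfv, hhv] <;> norm_num
  -- existence characterization
  have equiv1 : ∀ h ∈ P,
      ((∃ a ∈ P, (∀ s, a s ≤ f s) ∧ (∀ s, f s ≤ a s + h s) ∧ (∀ s, a s + h s ≤ 1)) ↔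
        (fun s => min (f s) (1 - h s)) ∈ P) := by
    intro h hh
    constructor
    · rintro ⟨a, ha, ha1, ha2, ha3⟩
      convert ha using 1
      funext s
      have e1 := ha1 s; have e2 := ha2 s; have e3 := ha3 s
      rcases hval f hf s with hfv | hfv <;> rcases hval h hh s with hhv | hhv <;>
        rcases hval a ha s with hav | hav <;>
        simp only [hfv, hhv, hav] at e1 e2 e3 ⊢ <;> norm_num at *
    · intro hm
      refine ⟨_, hm, fun s => min_le_left _ _, fun s => ?_, fun s => ?_⟩ <;>
      · rcases hval f hf s with hfv | hfv <;> rcases hval h hh s with hhv | hhv <;>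
          rw [hfv, hhv] <;> norm_num
  have hg' : (fun s => 1 - g s) ∈ P := hc g hg
  have hgg : (fun s => min (f s) (1 - (1 - g s))) = (fun s => min (f s) (g s)) := by
    funext s; rw [sub_sub_cancel]
  have keymin : (fun s => min (f s) (1 - g s)) ∈ P ↔ (fun s => min (f s) (g s)) ∈ P := by
    constructor
    · exact key g hg
    · intro hm
      have : (fun s => min (f s) (1 - (1 - g s))) ∈ P := hgg ▸ hm
      exact key _ hg' this
  refine ⟨?_, keymin⟩
  rw [equiv1 g hg, equiv1 _ hg', hgg, keymin]
end
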